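/- The disease-free Jacobian has negative spectral abscissa: Let n ≥ 1, let M^S and M^R be n×n real movement matrices (nonnegative off-diagonal entries and zero column sums), and let v = diag(v_1,…,v_n), ε = diag(ε_1,…,ε_n), D = diag(d_1^H,…,d_n^H) be diagonal matrices with v_i ≥ 0, ε_i ≥ 0 and d_i^H > 0 for all i. Then every eigenvalue μ ∈ ℂ of the 2n×2n block matrix J = [[M^S − v − D, ε], [v, M^R − ε − D]] satisfies Re(μ) < 0. -/

import Mathlib

open Matrix

lemma spectrum_aux {m : Type*} [Fintype m] [DecidableEq m] (A : Matrix m m ℝ)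
    (hoff : ∀ i j, i ≠ j → 0 ≤ A i j) (hcol : ∀ j, ∑ i, A i j < 0)
    (μ : ℂ) (hμ : μ ∈ spectrum ℂ (A.map Complex.ofReal)) : μ.re < 0 := by
  set B := A.map (Complex.ofReal) with hB
  have h1 : μ ∈ spectrum ℂ Bᵀ := by
    rw [spectrum.mem_iff] at hμ ⊢
    intro h; apply hμ
    rw [Matrix.isUnit_iff_isUnit_det] at h ⊢
    have hT : (algebraMap ℂ (Matrix m m ℂ) μ - B)ᵀ = algebraMap ℂ (Matrix m m ℂ) μ - Bᵀ := by
      rw [Matrix.transpose_sub]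
      congr 1
      simp [Matrix.algebraMap_eq_diagonal]
    rw [← Matrix.det_transpose, hT]
    exact h
  have h2 : Module.End.HasEigenvalue (Matrix.toLin' Bᵀ) μ := by
    show Module.End.HasEigenvalue (Matrix.toLinAlgEquiv' Bᵀ) μ
    rw [Module.End.hasEigenvalue_iff_mem_spectrum, AlgEquiv.spectrum_eq]
    exact h1
  obtain ⟨k, hk⟩ := eigenvalue_mem_ball h2
  rw [Metric.mem_closedBall, Complex.dist_eq] at hk
  have hre : μ.re - A k k ≤ ‖μ - Bᵀ k k‖ := by
    have := Complex.abs_re_le_norm (μ - Bᵀ k k)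
    have h' : (μ - Bᵀ k k).re = μ.re - A k k := by
      simp [hB, Matrix.transpose_apply, Matrix.map_apply]
    rw [h'] at this
    exact (le_abs_self _).trans this
  have hrad : ∑ j ∈ Finset.univ.erase k, ‖Bᵀ k j‖ = ∑ j ∈ Finset.univ.erase k, A j k := by
    apply Finset.sum_congr rfl
    intro j hj
    have hjk : j ≠ k := Finset.ne_of_mem_erase hj
    simp [hB, Matrix.transpose_apply, Matrix.map_apply,
      abs_of_nonneg (hoff j k hjk)]
  have hsum : ∑ j ∈ Finset.univ.erase k, A j k = (∑ j, A j k) - A k k := by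
    rw [Finset.sum_erase_eq_sub (Finset.mem_univ k)]
  have : μ.re - A k k ≤ (∑ j, A j k) - A k k := by
    calc μ.re - A k k ≤ ‖μ - Bᵀ k k‖ := hre
    _ ≤ ∑ j ∈ Finset.univ.erase k, ‖Bᵀ k j‖ := hk
    _ = (∑ j, A j k) - A k k := by rw [hrad, hsum]
  have := sub_le_sub_iff_right (A k k) |>.mp this
  exact lt_of_le_of_lt this (hcol k)

/-- The disease-free Jacobian of the cholera metapopulation model has
negative spectral abscissa: every complex eigenvalue of the block matrix
`[[M^S - v - D, ε], [v, M^R - ε - D]]` has negative real part. -/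
theorem cholera_disease_free_jacobian_spectral_abscissa_neg
    (n : ℕ) (hn : 1 ≤ n)
    (MS MR : Matrix (Fin n) (Fin n) ℝ)
    (hMSoff : ∀ i j, i ≠ j → 0 ≤ MS i j) (hMScol : ∀ j, ∑ i, MS i j = 0)
    (hMRoff : ∀ i j, i ≠ j → 0 ≤ MR i j) (hMRcol : ∀ j, ∑ i, MR i j = 0)
    (v ε dH : Fin n → ℝ)
    (hv : ∀ i, 0 ≤ v i) (hε : ∀ i, 0 ≤ ε i) (hdH : ∀ i, 0 < dH i) :
    ∀ μ ∈ spectrum ℂ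
      ((Matrix.fromBlocks
        (MS - Matrix.diagonal v - Matrix.diagonal dH) (Matrix.diagonal ε)
        (Matrix.diagonal v) (MR - Matrix.diagonal ε - Matrix.diagonal dH)).map
          Complex.ofReal),
      μ.re < 0 := by
  intro μ hμ
  refine spectrum_aux _ ?_ ?_ μ hμ
  · rintro (i | i) (j | j) hij
    · have h : i ≠ j := fun h => hij (by rw [h])
      simpa [Matrix.sub_apply, Matrix.diagonal_apply_ne _ h] using hMSoff i j h
    · rcases eq_or_ne i j with rfl | h
      · simpa [Matrix.diagonal_apply_eq] using hε i
      · simp [Matrix.diagonal_apply_ne _ h]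
    · rcases eq_or_ne i j with rfl | h
      · simpa [Matrix.diagonal_apply_eq] using hv i
      · simp [Matrix.diagonal_apply_ne _ h]
    · have h : i ≠ j := fun h => hij (by rw [h])
      simpa [Matrix.sub_apply, Matrix.diagonal_apply_ne _ h] using hMRoff i j h
  · have hdiag : ∀ (w : Fin n → ℝ) (j : Fin n), ∑ i, Matrix.diagonal w i j = w j := by
      intro w j
      simp [Matrix.diagonal_apply]
    rintro (j | j)
    · have : ∑ i, ((MS - Matrix.diagonal v - Matrix.diagonal dH) i j)
          + ∑ i, Matrix.diagonal v i j = -dH j := by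
        simp only [Matrix.sub_apply, Finset.sum_sub_distrib, hMScol, hdiag]
        ring
      rw [Fintype.sum_sum_type]
      simp only [Matrix.fromBlocks_apply₁₁, Matrix.fromBlocks_apply₂₁]
      rw [this]
      exact neg_neg_iff_pos.mpr (hdH j)
    · have : ∑ i, Matrix.diagonal ε i j
          + ∑ i, ((MR - Matrix.diagonal ε - Matrix.diagonal dH) i j) = -dH j := by
        simp only [Matrix.sub_apply, Finset.sum_sub_distrib, hMRcol, hdiag]
        ring
      rw [Fintype.sum_sum_type]
      simp only [Matrix.fromBlocks_apply₁₂, Matrix.fromBlocks_apply₂₂]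
      rw [this]
      exact neg_neg_iff_pos.mpr (hdH j)
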